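/- The confluent hypergeometric series H_A^{(n,p)}(a, b₁,...,b_n; c₁,...,c_n; ξ, η) = ∑_{m₁,...,m_{n+p} ≥ 0} (a)_{m₁+⋯+m_n − m_{n+1} − ⋯ − m_{n+p}} (b₁)_{m₁}⋯(b_n)_{m_n} / (m₁!⋯m_{n+p}! (c₁)_{m₁}⋯(c_n)_{m_n}) · ξ₁^{m₁}⋯ξ_n^{m_n} η₁^{m_{n+1}}⋯η_p^{m_{n+p}} converges absolutely for all η ∈ ℂ^p whenever |ξ₁| + ⋯ + |ξ_n| < 1, provided a is not an integer and no cⱼ is a non-positive integer. -/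

import Mathlib

/-- Generalized Pochhammer symbol (a)_ν = Γ(a+ν)/Γ(a) for an integer ν. -/
noncomputable def pochZ (a : ℂ) (ν : ℤ) : ℂ :=
  Complex.Gamma (a + ν) / Complex.Gamma a

open Finset

namespace HAaux

lemma prod_le_const_mul_geom {u : ℕ → ℝ} {q : ℝ} (hq : 0 < q) (hu : ∀ k, 0 ≤ u k)
    {K : ℕ} (hK : ∀ k, K ≤ k → u k ≤ q) :
    ∃ C > 0, ∀ M, ∏ k ∈ range M, u k ≤ C * q ^ M := by
  set v : ℕ → ℝ := fun k => max (u k) q / q with hv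
  have hv1 : ∀ k, 1 ≤ v k := fun k => (one_le_div hq).2 (le_max_right _ _)
  have hvK : ∀ k, K ≤ k → v k = 1 := fun k hk => by
    simp [hv, max_eq_right (hK k hk), div_self hq.ne']
  refine ⟨∏ k ∈ range K, v k, prod_pos fun k _ => lt_of_lt_of_le one_pos (hv1 k), fun M => ?_⟩
  have h1 : ∏ k ∈ range M, u k ≤ ∏ k ∈ range M, v k * q := by
    refine prod_le_prod (fun k _ => hu k) (fun k _ => ?_)
    rw [div_mul_cancel₀ _ hq.ne']
    exact le_max_left _ _
  have h2 : ∏ k ∈ range M, v k * q = (∏ k ∈ range M, v k) * q ^ M := by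
    rw [prod_mul_distrib, prod_const, card_range]
  have h3 : ∏ k ∈ range M, v k ≤ ∏ k ∈ range K, v k := by
    rcases le_total M K with h | h
    · obtain ⟨d, rfl⟩ := Nat.exists_eq_add_of_le h
      rw [prod_range_add]
      have h1' : (1:ℝ) ≤ ∏ j ∈ range d, v (M + j) := by
        have := prod_le_prod (s := range d) (f := fun _ => (1:ℝ)) (g := fun j => v (M + j))
          (fun _ _ => zero_le_one) (fun j _ => hv1 _)
        simpa using this
      have h0 : (0:ℝ) ≤ ∏ k ∈ range M, v k :=
        prod_nonneg fun k _ => le_trans zero_le_one (hv1 k)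
      exact le_mul_of_one_le_right h0 h1'
    · obtain ⟨d, rfl⟩ := Nat.exists_eq_add_of_le h
      rw [prod_range_add]
      have he : ∏ j ∈ range d, v (K + j) = 1 :=
        prod_eq_one fun j _ => hvK _ (Nat.le_add_right _ _)
      rw [he, mul_one]
  calc ∏ k ∈ range M, u k ≤ (∏ k ∈ range M, v k) * q ^ M := h1.trans_eq h2
    _ ≤ (∏ k ∈ range K, v k) * q ^ M :=
        mul_le_mul_of_nonneg_right h3 (pow_nonneg hq.le M)

lemma abs_prod_le (x y : ℂ) (hy : ∀ k : ℕ, y + k ≠ 0) {q : ℝ} (hq : 1 < q) :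
    ∃ C > 0, ∀ m, ∏ k ∈ range m, ‖x + k‖
      ≤ C * q ^ m * ∏ k ∈ range m, ‖y + k‖ := by
  have hypos : ∀ k : ℕ, 0 < ‖y + k‖ := fun k =>
    norm_pos_iff.mpr (hy k)
  set u : ℕ → ℝ := fun k => ‖x + k‖ / ‖y + k‖ with hu
  set K : ℕ := ⌈(‖x‖ + q * ‖y‖) / (q - 1)⌉₊ + ⌈‖y‖⌉₊ + 1 with hKdef
  have hK : ∀ k, K ≤ k → u k ≤ q := by
    intro k hk
    have hky : ‖y‖ + 1 ≤ (k : ℝ) := by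
      have h1 : (⌈‖y‖⌉₊ + 1 : ℕ) ≤ k := le_trans (by omega) hk
      have h2 : ‖y‖ ≤ (⌈‖y‖⌉₊ : ℝ) := Nat.le_ceil _
      have h3 : ((⌈‖y‖⌉₊ + 1 : ℕ) : ℝ) ≤ (k : ℝ) := Nat.cast_le.2 h1
      push_cast at h3
      linarith
    have hyk : (k : ℝ) - ‖y‖ ≤ ‖y + k‖ := by
      have h := norm_add_le (y + (k:ℂ)) (-y)
      rw [show y + (k:ℂ) + -y = (k:ℂ) by ring, norm_neg] at h
      rw [Complex.norm_natCast] at h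
      linarith
    have hxk : ‖x + k‖ ≤ ‖x‖ + (k : ℝ) := by
      have := norm_add_le x (k : ℂ)
      rwa [Complex.norm_natCast] at this
    have hkK : (‖x‖ + q * ‖y‖) / (q - 1) ≤ (k : ℝ) := by
      have h1 : (⌈(‖x‖ + q * ‖y‖) / (q - 1)⌉₊ : ℕ) ≤ k := le_trans (by omega) hk
      exact le_trans (Nat.le_ceil _) (Nat.cast_le.2 h1)
    have hq1 : (0:ℝ) < q - 1 := by linarith
    have hnum : ‖x‖ + q * ‖y‖ ≤ (q - 1) * k :=
      (div_le_iff₀ hq1).1 hkK |>.trans (by ring_nf; exact le_refl _)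
    have hd : (0:ℝ) < (k : ℝ) - ‖y‖ := by
      have := norm_nonneg y; linarith
    have hmain : ‖x + k‖ ≤ q * ((k : ℝ) - ‖y‖) := by
      have : ‖x‖ + (k:ℝ) ≤ q * ((k : ℝ) - ‖y‖) := by nlinarith
      linarith
    calc u k ≤ ‖x + k‖ / ((k : ℝ) - ‖y‖) := by
          exact div_le_div_of_nonneg_left (norm_nonneg _) hd hyk |>.trans_eq rfl
      _ ≤ q := by
          rw [div_le_iff₀ hd]; exact hmain
  obtain ⟨C, hC0, hC⟩ := prod_le_const_mul_geom (lt_trans one_pos hq)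
    (fun k => div_nonneg (norm_nonneg _) (norm_nonneg _)) hK
  refine ⟨C, hC0, fun m => ?_⟩
  have heq : ∏ k ∈ range m, ‖x + k‖
      = (∏ k ∈ range m, u k) * ∏ k ∈ range m, ‖y + k‖ := by
    rw [← prod_mul_distrib]
    exact prod_congr rfl fun k _ => (div_mul_cancel₀ _ (hypos k).ne').symm
  rw [heq]
  exact mul_le_mul_of_nonneg_right (hC m) (prod_nonneg fun k _ => norm_nonneg _)



lemma exists_delta {a : ℂ} (ha : ∀ z : ℤ, a ≠ (z : ℂ)) :
    ∃ δ > 0, ∀ z : ℤ, δ ≤ ‖a + z‖ := by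
  by_cases him : a.im = 0
  · have hre : ∀ z : ℤ, a.re ≠ (z : ℝ) := by
      intro z h
      exact ha z (Complex.ext (by simpa using h) (by simpa using him))
    set f := Int.fract a.re with hf
    have hf0 : 0 < f := by
      rcases lt_or_eq_of_le (Int.fract_nonneg a.re) with h | h
      · exact h
      · exfalso
        have : a.re - ⌊a.re⌋ = 0 := by
          rw [Int.self_sub_floor, ← h]
        exact hre ⌊a.re⌋ (by linarith)
    have hf1 : f < 1 := Int.fract_lt_one _
    refine ⟨min f (1 - f), lt_min hf0 (by linarith), fun z => ?_⟩
    have key : min f (1 - f) ≤ |a.re + (z : ℝ)| := by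
      set y := a.re + (z : ℝ) with hy
      have hfr : Int.fract y = f := Int.fract_add_intCast _ _
      have hyf : y = (⌊y⌋ : ℝ) + f := by rw [← hfr]; exact (Int.floor_add_fract y).symm
      rcases le_or_gt 0 ⌊y⌋ with h | h
      · have : (0:ℝ) ≤ (⌊y⌋ : ℝ) := by exact_mod_cast h
        have hyge : f ≤ y := by linarith
        exact le_abs.2 (Or.inl (le_trans (min_le_left _ _) hyge))
      · have h'' : ⌊y⌋ ≤ -1 := by omega
        have h' : (⌊y⌋ : ℝ) ≤ -1 := by exact_mod_cast h''
        have hyle : y ≤ f - 1 := by linarith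
        refine le_abs.2 (Or.inr ?_)
        have : 1 - f ≤ -y := by linarith
        exact le_trans (min_le_right _ _) this
    calc min f (1 - f) ≤ |a.re + (z : ℝ)| := key
      _ = |(a + (z : ℂ)).re| := by simp
      _ ≤ ‖a + z‖ := Complex.abs_re_le_norm _
  · refine ⟨|a.im|, abs_pos.2 him, fun z => ?_⟩
    calc |a.im| = |(a + (z : ℂ)).im| := by simp
      _ ≤ ‖a + z‖ := Complex.abs_im_le_norm _

variable {a : ℂ}

lemma a_add_ne (ha : ∀ z : ℤ, a ≠ (z : ℂ)) (z : ℤ) : a + z ≠ 0 := by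
  intro h
  exact ha (-z) (by push_cast; linear_combination h)

lemma pochZ_succ (ha : ∀ z : ℤ, a ≠ (z : ℂ)) (z : ℤ) :
    pochZ a (z + 1) = (a + z) * pochZ a z := by
  unfold pochZ
  have h : a + ((z + 1 : ℤ) : ℂ) = (a + z) + 1 := by push_cast; ring
  rw [h, Complex.Gamma_add_one _ (a_add_ne ha z), mul_div_assoc]

lemma pochZ_natCast (ha : ∀ z : ℤ, a ≠ (z : ℂ)) (M : ℕ) :
    pochZ a (M : ℤ) = ∏ k ∈ range M, (a + k) := by
  induction M with
  | zero =>
      simp only [Nat.cast_zero, range_zero, prod_empty]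
      unfold pochZ
      simp only [Int.cast_zero, add_zero]
      exact div_self (Complex.Gamma_ne_zero fun m => ha (-m) ∘ (by push_cast; intro h; linear_combination h))
  | succ M ih =>
      have h : ((M + 1 : ℕ) : ℤ) = (M : ℤ) + 1 := by push_cast; ring
      rw [h, pochZ_succ ha, ih, prod_range_succ]
      push_cast
      ring

lemma pochZ_sub_le (ha : ∀ z : ℤ, a ≠ (z : ℂ)) {δ : ℝ} (hδ0 : 0 < δ)
    (hδ : ∀ z : ℤ, δ ≤ ‖a + z‖) (z : ℤ) (N : ℕ) :
    ‖pochZ a (z - N)‖ * δ ^ N ≤ ‖pochZ a z‖ := by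
  induction N with
  | zero => simp
  | succ N ih =>
      have hstep : pochZ a (z - N) = (a + ((z:ℂ) - N - 1)) * pochZ a (z - N - 1) := by
        have h0 := pochZ_succ ha (z - N - 1)
        rw [show z - (N:ℤ) - 1 + 1 = z - N by ring] at h0
        push_cast at h0
        exact h0
      have h1 : ‖pochZ a (z - (N + 1 : ℕ))‖ * δ
          ≤ ‖pochZ a (z - N)‖ := by
        have hcast : z - ((N : ℤ) + 1) = z - N - 1 := by ring
        rw [show ((N + 1 : ℕ) : ℤ) = (N : ℤ) + 1 by push_cast; ring, hcast, hstep, norm_mul]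
        have hδ' := hδ (z - N - 1)
        push_cast at hδ'
        have habs : (0:ℝ) ≤ ‖pochZ a (z - N - 1)‖ := norm_nonneg _
        calc ‖pochZ a (z - N - 1)‖ * δ
            ≤ ‖pochZ a (z - N - 1)‖ * ‖a + ((z:ℂ) - N - 1)‖ :=
              mul_le_mul_of_nonneg_left hδ' habs
          _ = ‖a + ((z:ℂ) - N - 1)‖ * ‖pochZ a (z - N - 1)‖ :=
              mul_comm _ _
      calc ‖pochZ a (z - (N + 1 : ℕ))‖ * δ ^ (N + 1)
          = ‖pochZ a (z - (N + 1 : ℕ))‖ * δ * δ ^ N := by ring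
        _ ≤ ‖pochZ a (z - N)‖ * δ ^ N :=
            mul_le_mul_of_nonneg_right h1 (pow_nonneg hδ0.le N)
        _ ≤ ‖pochZ a z‖ := ih

lemma ascPochhammer_eval_prod (x : ℂ) (m : ℕ) :
    (ascPochhammer ℂ m).eval x = ∏ k ∈ range m, (x + k) := by
  induction m with
  | zero => simp [ascPochhammer_zero]
  | succ m ih => rw [ascPochhammer_succ_eval, ih, prod_range_succ]



lemma summable_pi_prod : ∀ (p : ℕ) (g : Fin p → ℕ → ℝ), (∀ j k, 0 ≤ g j k) →
    (∀ j, Summable (g j)) → Summable (fun m : Fin p → ℕ => ∏ j, g j (m j))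
  | 0, g, _, _ => by
      simpa using (summable_of_finite_support (Set.toFinite _) :
        Summable (fun m : Fin 0 → ℕ => ∏ j, g j (m j)))
  | (p + 1), g, hg0, hgs => by
      have hrec := summable_pi_prod p (fun j => g j.succ) (fun j k => hg0 _ _)
        (fun j => hgs _)
      have hmul := (hgs 0).mul_of_nonneg hrec (fun k => hg0 0 k)
        (fun m => prod_nonneg fun j _ => hg0 _ _)
      set e := Fin.consEquiv (fun _ : Fin (p + 1) => ℕ)
      rw [← Equiv.summable_iff e]
      refine hmul.congr fun z => ?_
      show g 0 z.1 * ∏ j : Fin p, g j.succ (z.2 j) = ∏ j, g j (e z j)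
      rw [Fin.prod_univ_succ]
      simp [e, Fin.consEquiv]

lemma summable_multinomial {n : ℕ} (x : Fin n → ℝ) (hx : ∀ i, 0 ≤ x i)
    (hs : ∑ i, x i < 1) :
    Summable (fun m : Fin n → ℕ =>
      ((∑ i, m i).factorial : ℝ) * ∏ i, x i ^ m i / (m i).factorial) := by
  set t := ∑ i, x i with ht
  have ht0 : 0 ≤ t := sum_nonneg fun i _ => hx i
  have hgeom : Summable (fun M : ℕ => t ^ M) := summable_geometric_of_lt_one ht0 hs
  set F : (Fin n → ℕ) → ℝ :=
    fun m => ((∑ i, m i).factorial : ℝ) * ∏ i, x i ^ m i / (m i).factorial with hF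
  have hF0 : ∀ m, 0 ≤ F m := by
    intro m
    apply mul_nonneg (Nat.cast_nonneg _)
    exact prod_nonneg fun i _ => div_nonneg (pow_nonneg (hx i) _) (Nat.cast_nonneg _)
  have hslice : ∀ M : ℕ, ∑ m ∈ piAntidiag (univ : Finset (Fin n)) M, F m = t ^ M := by
    intro M
    rw [ht, sum_pow_eq_sum_piAntidiag]
    refine sum_congr rfl fun m hm => ?_
    obtain ⟨hsum, -⟩ := mem_piAntidiag.1 hm
    have hspec : ((∏ i, (m i).factorial : ℕ) : ℝ) * (Nat.multinomial univ m : ℝ)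
        = ((∑ i, m i).factorial : ℝ) := by exact_mod_cast congrArg Nat.cast (Nat.multinomial_spec univ m)
    have hprodne : ((∏ i, (m i).factorial : ℕ) : ℝ) ≠ 0 := by
      positivity
    rw [hF]
    simp only []
    rw [prod_div_distrib, hsum]
    rw [hsum] at hspec
    rw [← hspec]
    push_cast
    field_simp
  apply summable_of_sum_le (c := ∑' M : ℕ, t ^ M) hF0
  intro u
  set D := u.sup (fun m => ∑ i, m i) with hD
  have husub : u ⊆ (range (D + 1)).biUnion
      (fun M => piAntidiag (univ : Finset (Fin n)) M) := by
    intro m hm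
    refine mem_biUnion.2 ⟨∑ i, m i, mem_range.2 (Nat.lt_succ_of_le (le_sup hm)), ?_⟩
    exact mem_piAntidiag.2 ⟨rfl, fun i _ => mem_univ i⟩
  have hdisj : Set.PairwiseDisjoint (↑(range (D + 1)) : Set ℕ)
      (fun M => piAntidiag (univ : Finset (Fin n)) M) := by
    intro M _ M' _ hMM'
    refine disjoint_left.2 fun m hm hm' => hMM' ?_
    rw [← (mem_piAntidiag.1 hm).1, ← (mem_piAntidiag.1 hm').1]
  calc ∑ m ∈ u, F m
      ≤ ∑ m ∈ (range (D + 1)).biUnion (fun M => piAntidiag univ M), F m :=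
        sum_le_sum_of_subset_of_nonneg husub (fun m _ _ => hF0 m)
    _ = ∑ M ∈ range (D + 1), ∑ m ∈ piAntidiag (univ : Finset (Fin n)) M, F m :=
        sum_biUnion hdisj
    _ = ∑ M ∈ range (D + 1), t ^ M := sum_congr rfl fun M _ => hslice M
    _ ≤ ∑' M : ℕ, t ^ M :=
        sum_le_hasSum _ (fun M _ => pow_nonneg ht0 M) hgeom.hasSum


end HAaux

set_option maxHeartbeats 2000000 in
/-- The confluent hypergeometric series H_A^{(n,p)} converges absolutely
for all η ∈ ℂ^p whenever |ξ₁| + ⋯ + |ξ_n| < 1, provided a is not an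
integer and no cⱼ is a non-positive integer. -/
theorem HA_summable (n p : ℕ) (a : ℂ) (b c : Fin n → ℂ)
    (ha : ∀ z : ℤ, a ≠ (z : ℂ))
    (hc : ∀ j : Fin n, ∀ k : ℕ, c j ≠ -(k : ℂ))
    (ξ : Fin n → ℂ) (hξ : ∑ i, ‖ξ i‖ < 1)
    (η : Fin p → ℂ) :
    Summable (fun m : (Fin n → ℕ) × (Fin p → ℕ) =>
      pochZ a ((∑ i, (m.1 i : ℤ)) - ∑ j, (m.2 j : ℤ)) *
        (∏ i, (ascPochhammer ℂ (m.1 i)).eval (b i) /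
          ((Nat.factorial (m.1 i) : ℂ) * (ascPochhammer ℂ (m.1 i)).eval (c i))) *
        (∏ j, (1 : ℂ) / (Nat.factorial (m.2 j) : ℂ)) *
        (∏ i, ξ i ^ m.1 i) * ∏ j, η j ^ m.2 j) := by
  classical
  set ρ := ∑ i, ‖ξ i‖ with hρ
  have hρ0 : 0 ≤ ρ := sum_nonneg fun i _ => norm_nonneg _
  set t := (1 + ρ) / 2 with htdef
  have hρt : ρ < t := by rw [htdef]; linarith
  have ht1 : t < 1 := by rw [htdef]; linarith
  have ht0 : 0 < t := by rw [htdef]; linarith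
  set w := max ρ (t / 2) with hw
  have hw0 : 0 < w := lt_of_lt_of_le (half_pos ht0) (le_max_right _ _)
  have hwt : w < t := max_lt hρt (by linarith)
  set s := t / w with hs
  have hs1 : 1 < s := (one_lt_div hw0).2 hwt
  set q := Real.sqrt s with hqdef
  have hq1 : 1 < q := by
    rw [hqdef, show (1:ℝ) = Real.sqrt 1 by simp]
    exact Real.sqrt_lt_sqrt zero_le_one hs1
  have hq0 : 0 < q := lt_trans one_pos hq1
  have hqq : q * q = s := Real.mul_self_sqrt (by positivity)
  have hsum_x : ∑ i, q * q * ‖ξ i‖ < 1 := by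
    rw [← mul_sum, hqq, ← hρ]
    have hle : s * ρ ≤ t := by
      rw [hs, div_mul_eq_mul_div, div_le_iff₀ hw0]
      exact mul_le_mul_of_nonneg_left (le_max_left _ _) ht0.le
    linarith
  clear_value ρ t w s q
  obtain ⟨δ, hδ0, hδ⟩ := HAaux.exists_delta ha
  obtain ⟨Ca, hCa0, hCa⟩ := HAaux.abs_prod_le a 1
    (fun k => by
      intro h
      have h' : ((k : ℂ) + 1) = 0 := by linear_combination h
      exact Nat.cast_add_one_ne_zero k h') hq1
  have hfact : ∀ m : ℕ, ∏ k ∈ range m, ‖1 + (k:ℂ)‖ = (m.factorial : ℝ) := by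
    intro m
    calc ∏ k ∈ range m, ‖1 + (k:ℂ)‖
        = ∏ k ∈ range m, ((k + 1 : ℕ) : ℝ) := by
          refine prod_congr rfl fun k _ => ?_
          rw [show (1:ℂ) + (k:ℂ) = ((k + 1 : ℕ) : ℂ) by push_cast; ring,
            Complex.norm_natCast]
      _ = ((∏ k ∈ range m, (k + 1) : ℕ) : ℝ) := by push_cast; rfl
      _ = (m.factorial : ℝ) := by rw [prod_range_add_one_eq_factorial]
  choose C hC0 hC using fun i : Fin n =>
    HAaux.abs_prod_le (b i) (c i)
      (fun k => by
        intro h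
        exact hc i k (by linear_combination h)) hq1
  set K0 := Ca * ∏ i, C i with hK0
  set g : (Fin n → ℕ) × (Fin p → ℕ) → ℝ := fun m =>
    K0 * (((∑ i, m.1 i).factorial : ℝ) *
        ∏ i, (q * q * ‖ξ i‖) ^ m.1 i / (m.1 i).factorial) *
      ∏ j, (‖η j‖ / δ) ^ m.2 j / (m.2 j).factorial with hgdef
  have hgsum : Summable g := by
    have hFsum := HAaux.summable_multinomial (fun i => q * q * ‖ξ i‖)
      (fun i => by positivity) hsum_x
    have hGsum := HAaux.summable_pi_prod p
      (fun j k => (‖η j‖ / δ) ^ k / k.factorial)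
      (fun j k => by positivity) (fun j => Real.summable_pow_div_factorial _)
    have hFG := hFsum.mul_of_nonneg hGsum
      (fun m => by positivity)
      (fun m => prod_nonneg fun j _ => by positivity)
    exact (hFG.mul_left K0).congr fun m => by rw [hgdef]; ring
  clear_value K0 g
  refine Summable.of_norm_bounded hgsum ?_
  rintro ⟨m1, m2⟩
  set M := ∑ i, m1 i with hM
  set N := ∑ j, m2 j with hN
  have hzsum : (∑ i, (m1 i : ℤ)) - ∑ j, (m2 j : ℤ) = (M : ℤ) - (N : ℤ) := by
    rw [hM, hN]; push_cast; ring
  clear_value M N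
  -- bound on the pochZ factor
  have h0 : ‖pochZ a ((M:ℤ) - (N:ℤ))‖
      ≤ Ca * q ^ M * M.factorial * δ⁻¹ ^ N := by
    have h1 := HAaux.pochZ_sub_le ha hδ0 hδ (M : ℤ) N
    have h2 : ‖pochZ a (M : ℤ)‖ ≤ Ca * q ^ M * M.factorial := by
      rw [HAaux.pochZ_natCast ha M, norm_prod]
      calc ∏ k ∈ range M, ‖a + k‖
          ≤ Ca * q ^ M * ∏ k ∈ range M, ‖1 + (k:ℂ)‖ := hCa M
        _ = Ca * q ^ M * M.factorial := by rw [hfact M]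
    have hδN : (0:ℝ) < δ ^ N := pow_pos hδ0 N
    calc ‖pochZ a ((M:ℤ) - (N:ℤ))‖
        = ‖pochZ a ((M:ℤ) - (N:ℤ))‖ * δ ^ N * (δ ^ N)⁻¹ := by
          field_simp
      _ ≤ Ca * q ^ M * M.factorial * (δ ^ N)⁻¹ := by
          refine mul_le_mul_of_nonneg_right ?_ (inv_nonneg.2 hδN.le)
          exact le_trans h1 h2
      _ = Ca * q ^ M * M.factorial * δ⁻¹ ^ N := by rw [inv_pow]
  -- bound on each b/c factor
  have hbi : ∀ i, ‖(ascPochhammer ℂ (m1 i)).eval (b i) /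
        ((Nat.factorial (m1 i) : ℂ) * (ascPochhammer ℂ (m1 i)).eval (c i))‖
      ≤ C i * q ^ m1 i / (m1 i).factorial := by
    intro i
    have hcne : ∀ k : ℕ, c i + (k:ℂ) ≠ 0 := fun k h => hc i k (by linear_combination h)
    have hb' : ‖(ascPochhammer ℂ (m1 i)).eval (b i)‖
        = ∏ k ∈ range (m1 i), ‖b i + k‖ := by
      rw [HAaux.ascPochhammer_eval_prod, norm_prod]
    have hc' : ‖(ascPochhammer ℂ (m1 i)).eval (c i)‖
        = ∏ k ∈ range (m1 i), ‖c i + k‖ := by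
      rw [HAaux.ascPochhammer_eval_prod, norm_prod]
    have hcpos : 0 < ∏ k ∈ range (m1 i), ‖c i + k‖ :=
      prod_pos fun k _ => norm_pos_iff.mpr (hcne k)
    have hfpos : (0:ℝ) < (m1 i).factorial := by exact_mod_cast (m1 i).factorial_pos
    rw [norm_div, norm_mul, Complex.norm_natCast, hb', hc']
    rw [div_le_div_iff₀ (by positivity) hfpos]
    calc (∏ k ∈ range (m1 i), ‖b i + k‖) * (m1 i).factorial
        ≤ (C i * q ^ m1 i * ∏ k ∈ range (m1 i), ‖c i + k‖) *
            (m1 i).factorial := by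
          exact mul_le_mul_of_nonneg_right (hC i (m1 i)) hfpos.le
      _ = C i * q ^ m1 i *
            ((m1 i).factorial * ∏ k ∈ range (m1 i), ‖c i + k‖) := by
          ring
  -- assemble
  rw [norm_mul, norm_mul, norm_mul, norm_mul, norm_prod, norm_prod,
    norm_prod, norm_prod, hzsum]
  have hP2 : ∏ j, ‖(1:ℂ) / (Nat.factorial (m2 j) : ℂ)‖
      = ∏ j, (1:ℝ) / (m2 j).factorial := by
    refine prod_congr rfl fun j _ => ?_
    rw [norm_div, norm_one, Complex.norm_natCast]
  have hP3 : ∏ i, ‖ξ i ^ m1 i‖ = ∏ i, ‖ξ i‖ ^ m1 i :=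
    prod_congr rfl fun i _ => norm_pow _ _
  have hP4 : ∏ j, ‖η j ^ m2 j‖ = ∏ j, ‖η j‖ ^ m2 j :=
    prod_congr rfl fun j _ => norm_pow _ _
  rw [hP2, hP3, hP4]
  have hprod1 : (∏ i, ‖(ascPochhammer ℂ (m1 i)).eval (b i) /
        ((Nat.factorial (m1 i) : ℂ) * (ascPochhammer ℂ (m1 i)).eval (c i))‖)
      ≤ ∏ i, C i * q ^ m1 i / ((m1 i).factorial : ℝ) :=
    prod_le_prod (fun i _ => norm_nonneg _) (fun i _ => hbi i)
  set A0 := ‖pochZ a ((M:ℤ) - (N:ℤ))‖ with hA0def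
  set P1 := ∏ i, ‖(ascPochhammer ℂ (m1 i)).eval (b i) /
      ((Nat.factorial (m1 i) : ℂ) * (ascPochhammer ℂ (m1 i)).eval (c i))‖ with hP1def
  set P2 := ∏ j, (1:ℝ) / ((m2 j).factorial : ℝ) with hP2def
  set P3 := ∏ i, ‖ξ i‖ ^ m1 i with hP3def
  set P4 := ∏ j, ‖η j‖ ^ m2 j with hP4def
  set Q1 := ∏ i, C i * q ^ m1 i / ((m1 i).factorial : ℝ) with hQ1def
  set B0 := Ca * q ^ M * (M.factorial : ℝ) * δ⁻¹ ^ N with hB0def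
  clear_value A0 P1 P2 P3 P4 Q1 B0
  refine le_trans (b := B0 * Q1 * P2 * P3 * P4) ?_ (le_of_eq ?_)
  · have hA0nn : 0 ≤ A0 := by rw [hA0def]; exact norm_nonneg _
    have hP1nn : 0 ≤ P1 := hP1def ▸ prod_nonneg fun i _ => norm_nonneg _
    have hP2nn : 0 ≤ P2 := hP2def ▸ prod_nonneg fun j _ => by positivity
    have hP3nn : 0 ≤ P3 := hP3def ▸ prod_nonneg fun i _ => by positivity
    have hP4nn : 0 ≤ P4 := hP4def ▸ prod_nonneg fun j _ => by positivity
    have hB0nn : 0 ≤ B0 := hB0def ▸ by positivity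
    have h01 : A0 * P1 ≤ B0 * Q1 := mul_le_mul h0 hprod1 hP1nn hB0nn
    exact mul_le_mul_of_nonneg_right
      (mul_le_mul_of_nonneg_right (mul_le_mul_of_nonneg_right h01 hP2nn) hP3nn) hP4nn
  · have e1 : q ^ M = ∏ i, q ^ m1 i := by
      rw [hM, prod_pow_eq_pow_sum]
    have e2 : δ⁻¹ ^ N = ∏ j, δ⁻¹ ^ m2 j := by
      rw [hN, prod_pow_eq_pow_sum]
    have hki : ∏ i, (q * q * ‖ξ i‖) ^ m1 i / ((m1 i).factorial : ℝ)
        = ∏ i, q ^ m1 i * (q ^ m1 i / ((m1 i).factorial : ℝ)) *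
            ‖ξ i‖ ^ m1 i := by
      refine prod_congr rfl fun i _ => ?_
      rw [mul_pow, mul_pow]; ring
    have hkj : ∏ j, (‖η j‖ / δ) ^ m2 j / ((m2 j).factorial : ℝ)
        = ∏ j, δ⁻¹ ^ m2 j * ((1:ℝ) / ((m2 j).factorial : ℝ)) *
            ‖η j‖ ^ m2 j := by
      refine prod_congr rfl fun j _ => ?_
      rw [div_pow, inv_pow]; field_simp
    have hCs : Q1 = ∏ i, C i * (q ^ m1 i / ((m1 i).factorial : ℝ)) := by
      rw [hQ1def]
      exact prod_congr rfl fun i _ => by ring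
    rw [hgdef]
    show B0 * Q1 * P2 * P3 * P4
        = K0 * (((∑ i, m1 i).factorial : ℝ) *
            ∏ i, (q * q * ‖ξ i‖) ^ m1 i / ((m1 i).factorial : ℝ)) *
          ∏ j, (‖η j‖ / δ) ^ m2 j / ((m2 j).factorial : ℝ)
    rw [hki, hkj, hCs, hB0def, e1, e2, ← hM, hK0, hP2def, hP3def, hP4def]
    simp only [prod_mul_distrib]
    ring
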